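/- Let G be a graph on an even number n of vertices that is extremal and non-forbidden: at least n−1 vertices have degree ≥ n−2, the vertex u of minimum degree satisfies 3 ≤ deg(u) ≤ n−3, G is not such that all vertices have degree ≥ n−2. Suppose there exists an initial profile s₀ with exactly n/2 − 1 vertices having preference 1, s₀(u) = 0, exactly ⌊deg(u)/2⌋ + 1 neighbors of u have preference 1, and some neighbor x of u has preference 0 such that if deg(x) = n−2 then the unique non-neighbor of x also has preference 0. Then starting from s₀ there is a sequence of two updates (first u flips to 1, then x flips to 1) after which n/2 + 1 vertices have preference 1 and none of them is unhappy; hence G is mbM. -/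

import Mathlib

set_option linter.unusedSectionVars false


open Finset

variable {V : Type*}

/-- Number of neighbors of `x` inside the set `A`. -/
def nbrCount [Fintype V] [DecidableEq V] (G : SimpleGraph V) [DecidableRel G.Adj]
    (x : V) (A : Finset V) : ℕ :=
  (A.filter (fun y => G.Adj x y)).card

/-- The width of the partition `(S, Sᶜ)`: the number of crossing edges. -/
def bwidth [Fintype V] [DecidableEq V] (G : SimpleGraph V) [DecidableRel G.Adj]
    (S : Finset V) : ℕ :=
  ∑ x ∈ S, nbrCount G x Sᶜ

/-- Deficiency of a vertex with respect to the partition `(S, Sᶜ)`. -/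
def defic [Fintype V] [DecidableEq V] (G : SimpleGraph V) [DecidableRel G.Adj]
    (S : Finset V) (x : V) : ℤ :=
  if x ∈ S then (nbrCount G x S : ℤ) - (nbrCount G x Sᶜ : ℤ)
  else (nbrCount G x Sᶜ : ℤ) - (nbrCount G x S : ℤ)

/-- `(S, Sᶜ)` is a minimum bisection: `|S| = ⌈n/2⌉` and the width is minimal among
all such partitions. -/
def IsMinBisection [Fintype V] [DecidableEq V] (G : SimpleGraph V) [DecidableRel G.Adj]
    (S : Finset V) : Prop :=
  S.card = (Fintype.card V + 1) / 2 ∧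
  ∀ T : Finset V, T.card = S.card → bwidth G S ≤ bwidth G T

/-- A vertex is unhappy if a strict majority of its neighbors hold the opposite preference. -/
def Unhappy [Fintype V] [DecidableEq V] (G : SimpleGraph V) [DecidableRel G.Adj]
    (s : V → Bool) (x : V) : Prop :=
  (univ.filter (fun y => G.Adj x y ∧ s y = s x)).card <
  (univ.filter (fun y => G.Adj x y ∧ s y ≠ s x)).card

/-- One update step of the majority dynamics: an unhappy vertex flips its preference. -/
def FlipStep [Fintype V] [DecidableEq V] (G : SimpleGraph V) [DecidableRel G.Adj]
    (s t : V → Bool) : Prop :=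
  ∃ x, Unhappy G s x ∧ t = Function.update s x (!s x)

/-- Reachability by a (possibly empty) sequence of updates. -/
def ReachesProf [Fintype V] [DecidableEq V] (G : SimpleGraph V) [DecidableRel G.Adj]
    (s t : V → Bool) : Prop :=
  Relation.ReflTransGen (FlipStep G) s t

/-- A profile is stable if no vertex is unhappy. -/
def StableProf [Fintype V] [DecidableEq V] (G : SimpleGraph V) [DecidableRel G.Adj]
    (s : V → Bool) : Prop :=
  ∀ x, ¬ Unhappy G s x

/-- Number of vertices with preference 1. -/
def onesCount [Fintype V] (s : V → Bool) : ℕ :=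
  (univ.filter (fun x => s x = true)).card

/-- Number of vertices with preference 0. -/
def zerosCount [Fintype V] (s : V → Bool) : ℕ :=
  (univ.filter (fun x => s x = false)).card

/-- Minority becomes majority: there is an initial profile with a strict majority of
0-preferences and a sequence of updates reaching a stable profile in which at most half
of the vertices prefer 0. -/
def MbM [Fintype V] [DecidableEq V] (G : SimpleGraph V) [DecidableRel G.Adj] : Prop :=
  ∃ s₀ : V → Bool, 2 * zerosCount s₀ > Fintype.card V ∧
    ∃ t, ReachesProf G s₀ t ∧ StableProf G t ∧ 2 * zerosCount t ≤ Fintype.card V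


section Aux

variable [Fintype V] [DecidableEq V] (G : SimpleGraph V) [DecidableRel G.Adj]

lemma ones_add_zeros (s : V → Bool) : onesCount s + zerosCount s = Fintype.card V := by
  classical
  have := Finset.card_filter_add_card_filter_not
    (s := (univ : Finset V)) (p := fun x => s x = true)
  simpa [onesCount, zerosCount, Bool.not_eq_true] using this

lemma onesCount_update_true (s : V → Bool) (w : V) (hw : s w = false) :
    onesCount (Function.update s w true) = onesCount s + 1 := by
  unfold onesCount
  have h : univ.filter (fun z => Function.update s w true z = true)
      = insert w (univ.filter (fun z => s z = true)) := by
    ext z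
    by_cases hz : z = w <;>
      simp [hz, Function.update_apply, hw]
  rw [h, card_insert_of_notMem (by simp [hw])]

lemma zerosCount_update_true (s : V → Bool) (w : V) (hw : s w = false) :
    zerosCount (Function.update s w true) = zerosCount s - 1 := by
  unfold zerosCount
  have h : univ.filter (fun z => Function.update s w true z = false)
      = (univ.filter (fun z => s z = false)).erase w := by
    ext z
    by_cases hz : z = w <;> simp [hz, Function.update_apply]
  rw [h, card_erase_of_mem (by simp [hw])]

lemma same_add_opp (s : V → Bool) (x : V) :
    (univ.filter (fun y => G.Adj x y ∧ s y = s x)).card +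
    (univ.filter (fun y => G.Adj x y ∧ s y ≠ s x)).card = G.degree x := by
  classical
  have h1 : univ.filter (fun y => G.Adj x y ∧ s y = s x)
      = (G.neighborFinset x).filter (fun y => s y = s x) := by
    ext z; simp [SimpleGraph.mem_neighborFinset]
  have h2 : univ.filter (fun y => G.Adj x y ∧ s y ≠ s x)
      = (G.neighborFinset x).filter (fun y => ¬ (s y = s x)) := by
    ext z; simp [SimpleGraph.mem_neighborFinset]
  rw [h1, h2, Finset.card_filter_add_card_filter_not,
    SimpleGraph.card_neighborFinset_eq_degree]

lemma not_unhappy_flip_self (s : V → Bool) (w : V) (hw : s w = false)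
    (h : Unhappy G s w) : ¬ Unhappy G (Function.update s w true) w := by
  set s' := Function.update s w true with hs'
  have hs'w : s' w = true := by simp [hs']
  have e1 : univ.filter (fun y => G.Adj w y ∧ s' y = s' w)
      = univ.filter (fun y => G.Adj w y ∧ s y ≠ s w) := by
    ext z
    simp only [mem_filter, mem_univ, true_and, and_congr_right_iff]
    intro hadj
    have hzw : z ≠ w := fun h' => G.loopless.irrefl w (h' ▸ hadj)
    simp [hs', Function.update_of_ne hzw, hs'w, hw]
  have e2 : univ.filter (fun y => G.Adj w y ∧ s' y ≠ s' w)
      = univ.filter (fun y => G.Adj w y ∧ s y = s w) := by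
    ext z
    simp only [mem_filter, mem_univ, true_and, and_congr_right_iff]
    intro hadj
    have hzw : z ≠ w := fun h' => G.loopless.irrefl w (h' ▸ hadj)
    simp [hs', Function.update_of_ne hzw, hs'w, hw]
  unfold Unhappy at *
  rw [e1, e2]
  omega

lemma not_unhappy_flip_other (s : V → Bool) (w y : V) (hw : s w = false)
    (hy : s y = true) (hne : y ≠ w) (h : ¬ Unhappy G s y) :
    ¬ Unhappy G (Function.update s w true) y := by
  set s' := Function.update s w true with hs'
  have hs'y : s' y = true := by rw [hs', Function.update_of_ne hne, hy]
  have sub1 : univ.filter (fun z => G.Adj y z ∧ s z = s y)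
      ⊆ univ.filter (fun z => G.Adj y z ∧ s' z = s' y) := by
    intro z hz
    simp only [mem_filter, mem_univ, true_and] at hz ⊢
    refine ⟨hz.1, ?_⟩
    have hzw : z ≠ w := by
      intro h'; rw [h', hw] at hz; rw [hy] at hz; exact absurd hz.2 (by simp)
    rw [hs', Function.update_of_ne hzw, Function.update_of_ne hne]; exact hz.2
  have sub2 : univ.filter (fun z => G.Adj y z ∧ s' z ≠ s' y)
      ⊆ univ.filter (fun z => G.Adj y z ∧ s z ≠ s y) := by
    intro z hz
    simp only [mem_filter, mem_univ, true_and] at hz ⊢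
    refine ⟨hz.1, ?_⟩
    rw [hs'] at hz
    have hzw : z ≠ w := by
      intro h'
      apply hz.2
      rw [h', Function.update_self, Function.update_of_ne hne, hy]
    rw [Function.update_of_ne hzw, Function.update_of_ne hne] at hz
    exact hz.2
  unfold Unhappy at *
  have c1 := Finset.card_le_card sub1
  have c2 := Finset.card_le_card sub2
  omega

lemma reach_stable (s : V → Bool) (h : ∀ y, s y = true → ¬ Unhappy G s y) :
    ∃ t, ReachesProf G s t ∧ StableProf G t ∧ zerosCount t ≤ zerosCount s := by
  classical
  suffices key : ∀ m : ℕ, ∀ s : V → Bool, zerosCount s ≤ m →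
      (∀ y, s y = true → ¬ Unhappy G s y) →
      ∃ t, ReachesProf G s t ∧ StableProf G t ∧ zerosCount t ≤ zerosCount s by
    exact key (zerosCount s) s le_rfl h
  intro m
  induction m with
  | zero =>
    intro s hle h
    have hall : ∀ y : V, s y = true := by
      intro y
      have hz : (univ.filter (fun x => s x = false)) = ∅ := by
        have : zerosCount s = 0 := Nat.le_zero.mp hle
        exact Finset.card_eq_zero.mp this
      by_contra hy
      have : y ∈ univ.filter (fun x => s x = false) := by
        simp [Bool.not_eq_true] at hy; simp [hy]
      rw [hz] at this; exact absurd this (Finset.notMem_empty y)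
    exact ⟨s, Relation.ReflTransGen.refl, fun y => h y (hall y), le_rfl⟩
  | succ m ih =>
    intro s hle h
    by_cases hst : StableProf G s
    · exact ⟨s, Relation.ReflTransGen.refl, hst, le_rfl⟩
    · obtain ⟨w, hw⟩ : ∃ w, Unhappy G s w := by
        unfold StableProf at hst; push_neg at hst; exact hst
      have hwf : s w = false := by
        cases hsw : s w with
        | false => rfl
        | true => exact absurd hw (h w hsw)
      set s' := Function.update s w true with hs'
      have hinv : ∀ y, s' y = true → ¬ Unhappy G s' y := by
        intro y hy
        by_cases hyw : y = w
        · rw [hyw]; exact not_unhappy_flip_self G s w hwf hw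
        · have hsy : s y = true := by
            rw [hs', Function.update_of_ne hyw] at hy; exact hy
          exact not_unhappy_flip_other G s w y hwf hsy hyw (h y hsy)
      have hzpos : 1 ≤ zerosCount s := by
        have : w ∈ univ.filter (fun x => s x = false) := by simp [hwf]
        have := Finset.card_pos.mpr ⟨w, this⟩
        exact this
      have hz' : zerosCount s' = zerosCount s - 1 := zerosCount_update_true s w hwf
      obtain ⟨t, ht1, ht2, ht3⟩ := ih s' (by omega) hinv
      refine ⟨t, ?_, ht2, by omega⟩
      refine Relation.ReflTransGen.head ⟨w, hw, ?_⟩ ht1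
      simp [hs', hwf]

end Aux

/-- extremal graphs: under the stated conditions on an even-order extremal
non-forbidden graph and a suitable initial profile with n/2 − 1 ones, the vertex u and
then its neighbor x flip to 1, after which n/2 + 1 vertices have preference 1 and none of
them is unhappy; hence G is mbM. -/
theorem stmt17 [Fintype V] [DecidableEq V] (G : SimpleGraph V) [DecidableRel G.Adj]
    (heven : Even (Fintype.card V))
    (hext : Fintype.card V - 1 ≤
      (Finset.univ.filter (fun x : V => Fintype.card V - 2 ≤ G.degree x)).card)
    (u : V) (humin : ∀ x : V, G.degree u ≤ G.degree x)
    (hlo : 3 ≤ G.degree u) (hhi : G.degree u ≤ Fintype.card V - 3)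
    (s₀ : V → Bool)
    (hones : onesCount s₀ = Fintype.card V / 2 - 1)
    (hu0 : s₀ u = false)
    (hnbr : ((G.neighborFinset u).filter (fun y => s₀ y = true)).card
      = G.degree u / 2 + 1)
    (x : V) (hux : G.Adj u x) (hx0 : s₀ x = false)
    (hcomp : G.degree x = Fintype.card V - 2 →
      ∀ y : V, y ≠ x → ¬ G.Adj x y → s₀ y = false) :
    Unhappy G s₀ u ∧
    Unhappy G (Function.update s₀ u true) x ∧
    onesCount (Function.update (Function.update s₀ u true) x true)
      = Fintype.card V / 2 + 1 ∧
    (∀ y : V, Function.update (Function.update s₀ u true) x true y = true →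
      ¬ Unhappy G (Function.update (Function.update s₀ u true) x true) y) ∧
    MbM G := by
  
  classical
  obtain ⟨k, hk⟩ := heven
  have hdult : G.degree u < Fintype.card V := G.degree_lt_card_verts u
  have hn6 : 6 ≤ Fintype.card V := by omega
  -- Part 1 : u is unhappy in s₀
  have e1 : univ.filter (fun y => G.Adj u y ∧ s₀ y ≠ s₀ u)
      = (G.neighborFinset u).filter (fun y => s₀ y = true) := by
    ext z
    simp only [mem_filter, mem_univ, true_and, SimpleGraph.mem_neighborFinset, hu0]
    constructor
    · rintro ⟨hadj, hne⟩
      exact ⟨hadj, by cases hb : s₀ z with | false => exact absurd hb hne | true => rfl⟩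
    · rintro ⟨hadj, hz⟩
      exact ⟨hadj, by rw [hz]; simp⟩
  have hsao := same_add_opp G s₀ u
  rw [e1, hnbr] at hsao
  have h1 : Unhappy G s₀ u := by
    unfold Unhappy
    rw [e1, hnbr]
    omega
  -- all vertices other than u have degree ≥ n - 2
  have hdegall : ∀ v : V, v ≠ u → Fintype.card V - 2 ≤ G.degree v := by
    set D := univ.filter (fun v : V => Fintype.card V - 2 ≤ G.degree v) with hD
    have hu_not : u ∉ D := by
      simp only [hD, mem_filter, mem_univ, true_and, not_le]
      omega
    have hsub : D ⊆ univ.erase u :=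
      fun v hv => mem_erase.mpr ⟨fun h => hu_not (h ▸ hv), mem_univ v⟩
    have hcard : (univ.erase u).card = Fintype.card V - 1 := by
      rw [card_erase_of_mem (mem_univ u), card_univ]
    have hDeq : D = univ.erase u :=
      eq_of_subset_of_card_le hsub (by rw [hcard]; exact hext)
    intro v hv
    have hvD : v ∈ D := hDeq ▸ mem_erase.mpr ⟨hv, mem_univ v⟩
    simpa [hD] using hvD
  have hxu : x ≠ u := fun h => G.loopless.irrefl u (h ▸ hux)
  have hdx : Fintype.card V - 2 ≤ G.degree x := hdegall x hxu
  have hdx' : G.degree x < Fintype.card V := G.degree_lt_card_verts x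
  set s₁ := Function.update s₀ u true with hs1e
  have hs1x : s₁ x = false := by rw [hs1e, Function.update_of_ne hxu]; exact hx0
  have hones1 : onesCount s₁ = Fintype.card V / 2 := by
    rw [hs1e, onesCount_update_true s₀ u hu0, hones]
    omega
  have hzeros1 := ones_add_zeros s₁
  -- every vertex with preference 1 in s₁ is adjacent to x
  have hAdjall : ∀ z, s₁ z = true → G.Adj x z := by
    intro z hz
    have hzx : z ≠ x := by intro h; rw [h, hs1x] at hz; exact absurd hz (by simp)
    by_contra hnadj
    have hzu : z ≠ u := by intro h; exact hnadj (h ▸ (G.adj_symm hux))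
    rw [hs1e, Function.update_of_ne hzu] at hz
    have hcase : G.degree x = Fintype.card V - 2 ∨ G.degree x = Fintype.card V - 1 := by
      omega
    rcases hcase with hc | hc
    · have := hcomp hc z hzx hnadj
      rw [this] at hz
      exact absurd hz (by simp)
    · have hnsub : G.neighborFinset x ⊆ univ.erase x := by
        intro w hw
        exact mem_erase.mpr
          ⟨fun h => G.loopless.irrefl x (h ▸ ((G.mem_neighborFinset x w).mp hw)), mem_univ w⟩
      have hne : G.neighborFinset x = univ.erase x := by
        refine eq_of_subset_of_card_le hnsub ?_
        rw [card_erase_of_mem (mem_univ x), card_univ,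
          G.card_neighborFinset_eq_degree]
        omega
      have : z ∈ G.neighborFinset x := by
        rw [hne]; exact mem_erase.mpr ⟨hzx, mem_univ z⟩
      exact hnadj ((G.mem_neighborFinset _ _).mp this)
  -- Part 2 : x is unhappy in s₁
  have e2 : univ.filter (fun y => G.Adj x y ∧ s₁ y ≠ s₁ x)
      = univ.filter (fun y => s₁ y = true) := by
    ext z
    simp only [mem_filter, mem_univ, true_and]
    constructor
    · rintro ⟨hadj, hne⟩
      rw [hs1x] at hne
      cases hb : s₁ z with
      | false => exact absurd hb hne
      | true => rfl
    · intro hz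
      exact ⟨hAdjall z hz, by rw [hz, hs1x]; simp⟩
  have hsub2 : univ.filter (fun y => G.Adj x y ∧ s₁ y = s₁ x)
      ⊆ (univ.filter (fun y => s₁ y = false)).erase x := by
    intro z hz
    simp only [mem_filter, mem_univ, true_and] at hz
    refine mem_erase.mpr ⟨fun h => G.loopless.irrefl x (h ▸ hz.1), ?_⟩
    simp only [mem_filter, mem_univ, true_and]
    rw [hz.2, hs1x]
  have hsame2 : (univ.filter (fun y => G.Adj x y ∧ s₁ y = s₁ x)).card
      ≤ zerosCount s₁ - 1 := by
    have := Finset.card_le_card hsub2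
    rwa [card_erase_of_mem (by simp [hs1x])] at this
  have h2 : Unhappy G s₁ x := by
    unfold Unhappy
    rw [e2]
    have hoeq : (univ.filter (fun y => s₁ y = true)).card = onesCount s₁ := rfl
    omega
  set s₂ := Function.update s₁ x true with hs2e
  have h3 : onesCount s₂ = Fintype.card V / 2 + 1 := by
    rw [hs2e, onesCount_update_true s₁ x hs1x, hones1]
  have hzeros2 := ones_add_zeros s₂
  have hs2u : s₂ u = true := by
    rw [hs2e, Function.update_of_ne (Ne.symm hxu), hs1e, Function.update_self]
  have hs2x : s₂ x = true := by rw [hs2e, Function.update_self]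
  -- Part 4 : no vertex with preference 1 in s₂ is unhappy
  have h4 : ∀ y : V, s₂ y = true → ¬ Unhappy G s₂ y := by
    intro y hy
    by_cases hyu : y = u
    · subst hyu
      have e4 : univ.filter (fun z => G.Adj y z ∧ s₂ z = s₂ y)
          = insert x ((G.neighborFinset y).filter (fun z => s₀ z = true)) := by
        ext z
        simp only [mem_filter, mem_univ, true_and, mem_insert,
          SimpleGraph.mem_neighborFinset]
        rw [hs2u]
        constructor
        · rintro ⟨hadj, hz⟩
          by_cases hzx : z = x
          · exact Or.inl hzx
          · refine Or.inr ⟨hadj, ?_⟩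
            have hzu : z ≠ y := fun h => G.loopless.irrefl y (h ▸ hadj)
            rw [hs2e, Function.update_of_ne hzx, hs1e, Function.update_of_ne hzu] at hz
            exact hz
        · rintro (rfl | ⟨hadj, hz⟩)
          · exact ⟨hux, hs2x⟩
          · have hzx : z ≠ x := by
              intro h; rw [h, hx0] at hz; exact absurd hz (by simp)
            have hzu : z ≠ y := fun h => G.loopless.irrefl y (h ▸ hadj)
            refine ⟨hadj, ?_⟩
            rw [hs2e, Function.update_of_ne hzx, hs1e, Function.update_of_ne hzu]
            exact hz
      have hc4 : (univ.filter (fun z => G.Adj y z ∧ s₂ z = s₂ y)).card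
          = G.degree y / 2 + 2 := by
        rw [e4, card_insert_of_notMem (by simp [hx0]), hnbr]
      have hsc := same_add_opp G s₂ y
      unfold Unhappy
      omega
    · have hdy : Fintype.card V - 2 ≤ G.degree y := hdegall y hyu
      have hdy' : G.degree y < Fintype.card V := G.degree_lt_card_verts y
      have hsubopp : univ.filter (fun z => G.Adj y z ∧ s₂ z ≠ s₂ y)
          ⊆ univ.filter (fun z => s₂ z = false) := by
        intro z hz
        simp only [mem_filter, mem_univ, true_and] at hz ⊢
        rw [hy] at hz
        cases hb : s₂ z with
        | false => rfl
        | true => exact absurd hb hz.2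
      have hoppcard : (univ.filter (fun z => G.Adj y z ∧ s₂ z ≠ s₂ y)).card
          ≤ zerosCount s₂ := Finset.card_le_card hsubopp
      set T := (univ.filter (fun z => s₂ z = true)).erase y with hT
      have hTcard : T.card = onesCount s₂ - 1 := by
        rw [hT, card_erase_of_mem (by simp [hy])]
        rfl
      have hsubT : T \ univ.filter (fun z => G.Adj y z ∧ s₂ z = s₂ y)
          ⊆ univ.erase y \ G.neighborFinset y := by
        intro z hz
        rw [mem_sdiff] at hz ⊢
        obtain ⟨hzT, hzn⟩ := hz
        rw [hT, mem_erase, mem_filter] at hzT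
        refine ⟨mem_erase.mpr ⟨hzT.1, mem_univ z⟩, ?_⟩
        intro hmem
        apply hzn
        simp only [mem_filter, mem_univ, true_and]
        exact ⟨(G.mem_neighborFinset _ _).mp hmem, by rw [hzT.2.2, hy]⟩
      have hnsub : G.neighborFinset y ⊆ univ.erase y := by
        intro w hw
        exact mem_erase.mpr
          ⟨fun h => G.loopless.irrefl y (h ▸ ((G.mem_neighborFinset y w).mp hw)), mem_univ w⟩
      have hcompl : (univ.erase y \ G.neighborFinset y).card ≤ 1 := by
        rw [card_sdiff_of_subset hnsub, card_erase_of_mem (mem_univ y), card_univ,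
          G.card_neighborFinset_eq_degree]
        omega
      have hge := Finset.le_card_sdiff
        (univ.filter (fun z => G.Adj y z ∧ s₂ z = s₂ y)) T
      have hle := Finset.card_le_card hsubT
      have hsamesub : (univ.filter (fun z => G.Adj y z ∧ s₂ z = s₂ y)).card
          ≤ Fintype.card V := by
        exact (Finset.card_le_card (Finset.filter_subset _ _)).trans (by rw [card_univ])
      unfold Unhappy
      omega
  refine ⟨h1, h2, h3, h4, ?_⟩
  -- MbM
  obtain ⟨t, ht1, ht2, ht3⟩ := reach_stable G s₂ h4
  have hzeros0 := ones_add_zeros s₀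
  refine ⟨s₀, by omega, t, ?_, ht2, by omega⟩
  refine Relation.ReflTransGen.head ⟨u, h1, ?_⟩ (Relation.ReflTransGen.head ⟨x, h2, ?_⟩ ht1)
  · rw [hu0, hs1e]; rfl
  · rw [hs1x, hs2e]; rfl
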